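/- Let q = p^k with p prime and suppose T = p^u · M with u ≥ 1 and gcd(M, q) = 1. A polynomial f over GF(q) of degree r with f(0) = 1 and period set {1, T} exists if and only if M = 1, u = 1, and 2 ≤ r ≤ p; in that case necessarily f(x) = (1-x)^r. -/
import Mathlib


open Polynomial

/-- The order of a polynomial `g` (with `g(0) ≠ 0`): the least `j ≥ 1` with `g ∣ x^j - 1`. -/
noncomputable def polyOrd {F : Type*} [Field F] (g : Polynomial F) : ℕ :=
  sInf {j : ℕ | 1 ≤ j ∧ g ∣ X ^ j - 1}

/-- The period set of `f`: the orders of all nonzero divisors of `f` with nonzero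
constant term. -/
noncomputable def periodSet {F : Type*} [Field F] (f : Polynomial F) : Set ℕ :=
  {t : ℕ | ∃ g : Polynomial F, g ∣ f ∧ g ≠ 0 ∧ g.coeff 0 ≠ 0 ∧ t = polyOrd g}

set_option linter.unusedSectionVars false
set_option linter.unusedVariables false

section Helpers

variable {F : Type*} [Field F]

lemma X_sub_one_ne_zero : (X - 1 : Polynomial F) ≠ 0 := fun h => by
  simpa using congrArg (eval 0) h

variable {p : ℕ} [hp : Fact p.Prime] [CharP F p]

lemma p_dvd_of_sq_dvd {j : ℕ} (hj : 1 ≤ j) (h : (1 - X : Polynomial F)^2 ∣ X^j - 1) :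
    p ∣ j := by
  have h2 : ((X : Polynomial F) - 1)^2 ∣ X^j - 1 := by
    rwa [show ((1:Polynomial F) - X)^2 = (X-1)^2 by ring] at h
  rw [← geom_sum_mul (X : Polynomial F) j, pow_two] at h2
  have hdvd : (X - 1 : Polynomial F) ∣ ∑ i ∈ Finset.range j, X^i :=
    (mul_dvd_mul_iff_right (X_sub_one_ne_zero (F := F))).mp h2
  obtain ⟨c, hc⟩ := hdvd
  have := congrArg (eval 1) hc
  simp at this
  exact (CharP.cast_eq_zero_iff F p j).mp this

lemma one_sub_X_pow_dvd {e : ℕ} (he : e ≤ p) : (1 - X : Polynomial F)^e ∣ X^p - 1 := by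
  have h1 : (X : Polynomial F)^p - 1 = (X - 1)^p := by
    rw [sub_pow_char, one_pow]
  rw [h1]
  exact dvd_trans (pow_dvd_pow_of_dvd ⟨-1, by ring⟩ e) (pow_dvd_pow _ he)

lemma polyOrd_eq_one {g : Polynomial F} (hg : g ∣ X - 1) : polyOrd g = 1 := by
  have h1 : 1 ∈ {j : ℕ | 1 ≤ j ∧ g ∣ X ^ j - 1} := ⟨le_refl 1, by simpa using hg⟩
  have h2 := Nat.sInf_le h1
  have h3 := (Nat.sInf_mem (⟨1, h1⟩ : Set.Nonempty _)).1
  simp only [polyOrd]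
  omega

lemma polyOrd_spec {g : Polynomial F} (h : polyOrd g ≠ 0) :
    1 ≤ polyOrd g ∧ g ∣ X ^ (polyOrd g) - 1 := by
  have hne : {j : ℕ | 1 ≤ j ∧ g ∣ X ^ j - 1}.Nonempty := by
    by_contra he
    rw [Set.not_nonempty_iff_eq_empty] at he
    exact h (by simp [polyOrd, he])
  exact Nat.sInf_mem hne

lemma polyOrd_pow_eq {e : ℕ} (h2 : 2 ≤ e) (hep : e ≤ p) :
    polyOrd ((1 - X : Polynomial F)^e) = p := by
  have hmem : p ∈ {j : ℕ | 1 ≤ j ∧ (1 - X : Polynomial F)^e ∣ X ^ j - 1} :=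
    ⟨hp.out.one_lt.le, one_sub_X_pow_dvd hep⟩
  have hle := Nat.sInf_le hmem
  have hspec := Nat.sInf_mem (⟨p, hmem⟩ : Set.Nonempty _)
  have hdvd2 : (1 - X : Polynomial F)^2 ∣ X ^ (sInf {j : ℕ | 1 ≤ j ∧ (1 - X : Polynomial F)^e ∣ X ^ j - 1}) - 1 :=
    dvd_trans (pow_dvd_pow _ h2) hspec.2
  have hpd := p_dvd_of_sq_dvd (p := p) hspec.1 hdvd2
  have := Nat.le_of_dvd hspec.1 hpd
  simp only [polyOrd]
  omega

lemma exists_pow_eq (n : ℕ) : ∀ f : Polynomial F, f.natDegree ≤ n → f ≠ 0 →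
    (∀ h : Polynomial F, Irreducible h → h ∣ f → Associated h (X - 1)) →
    ∃ c : F, c ≠ 0 ∧ f = C c * (X - 1) ^ f.natDegree := by
  induction n with
  | zero =>
    intro f hd h0 _
    have : f.natDegree = 0 := Nat.le_zero.mp hd
    refine ⟨f.coeff 0, ?_, ?_⟩
    · intro hc
      exact h0 (by rw [eq_C_of_natDegree_eq_zero this, hc, map_zero])
    · rw [this, pow_zero, mul_one]
      exact eq_C_of_natDegree_eq_zero this
  | succ n ih =>
    intro f hd h0 H
    by_cases hd0 : f.natDegree = 0
    · refine ⟨f.coeff 0, fun hc => h0 (by rw [eq_C_of_natDegree_eq_zero hd0, hc, map_zero]), ?_⟩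
      rw [hd0, pow_zero, mul_one]
      exact eq_C_of_natDegree_eq_zero hd0
    · have hnu : ¬ IsUnit f := fun h => hd0 (natDegree_eq_zero_of_isUnit h)
      obtain ⟨i, hi, hif⟩ := WfDvdMonoid.exists_irreducible_factor hnu h0
      have hXf : (X - 1 : Polynomial F) ∣ f := ((H i hi hif).symm.dvd_iff_dvd_left).mpr hif
      obtain ⟨g, hg⟩ := hXf
      have hg0 : g ≠ 0 := fun h => h0 (by rw [hg, h, mul_zero])
      have hX1 : (X - 1 : Polynomial F).natDegree = 1 := by
        simpa using natDegree_X_sub_C (1 : F)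
      have hdeg : f.natDegree = g.natDegree + 1 := by
        rw [hg, natDegree_mul X_sub_one_ne_zero hg0, hX1]
        omega
      obtain ⟨c, hc0, hc⟩ := ih g (by omega) hg0
        (fun h hh hhg => H h hh (dvd_trans hhg ⟨X - 1, by rw [hg]; ring⟩))
      have key : ∀ d : ℕ, g = C c * (X - 1) ^ d → f = C c * (X - 1) ^ (d + 1) :=
        fun d hgd => by rw [hg, hgd]; ring
      exact ⟨c, hc0, by rw [hdeg]; exact key g.natDegree hc⟩

lemma unique_lemma {T : ℕ} (hT2 : 2 ≤ T) (hpT : p ∣ T) (f : Polynomial F)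
    (hc : f.coeff 0 = 1) (hps : periodSet f = {1, T}) : f = (1 - X) ^ f.natDegree := by
  have hf0 : f ≠ 0 := fun h => by simp [h] at hc
  have hirr : Irreducible (X - 1 : Polynomial F) := by simpa using irreducible_X_sub_C (1 : F)
  have H : ∀ h : Polynomial F, Irreducible h → h ∣ f → Associated h (X - 1) := by
    intro h hh hd
    have hh0 : h ≠ 0 := hh.ne_zero
    have hhc : h.coeff 0 ≠ 0 := by
      obtain ⟨g, hg⟩ := hd
      intro hc0
      have h2 : (1:F) = h.coeff 0 * g.coeff 0 := by rw [← hc, hg, mul_coeff_zero]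
      rw [hc0, zero_mul] at h2
      exact one_ne_zero h2
    have hmem : polyOrd h ∈ periodSet f := ⟨h, hd, hh0, hhc, rfl⟩
    rw [hps] at hmem
    rcases hmem with h1 | hT
    · have hdvd : h ∣ X - 1 := by
        have := (polyOrd_spec (g := h) (by rw [h1]; omega)).2
        rwa [h1, pow_one] at this
      exact hh.associated_of_dvd hirr hdvd
    · exfalso
      simp only [Set.mem_singleton_iff] at hT
      obtain ⟨s, hs⟩ := hpT
      have hp2 : 2 ≤ p := hp.out.two_le
      have hs1 : 1 ≤ s := by
        rcases Nat.eq_zero_or_pos s with h0 | h0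
        · rw [h0, mul_zero] at hs; omega
        · omega
      have hno : polyOrd h ≠ 0 := by rw [hT]; omega
      have hspec := (polyOrd_spec hno).2
      rw [hT, hs] at hspec
      have hpow : (X : Polynomial F) ^ (p * s) - 1 = ((X : Polynomial F) ^ s - 1) ^ p := by
        rw [sub_pow_char, one_pow, ← pow_mul, mul_comm]
      rw [hpow] at hspec
      have hds : h ∣ (X : Polynomial F) ^ s - 1 := hh.prime.dvd_of_dvd_pow hspec
      have hle : polyOrd h ≤ s := Nat.sInf_le ⟨hs1, hds⟩
      rw [hT, hs] at hle
      nlinarith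
  obtain ⟨c, hc0, hcf⟩ := exists_pow_eq f.natDegree f le_rfl hf0 H
  set n := f.natDegree with hn
  have h1 : c * (-1 : F) ^ n = 1 := by
    have h2 := congrArg (eval 0) hcf
    rw [← coeff_zero_eq_eval_zero, hc] at h2
    simpa using h2.symm
  have key : ((-1:F) ^ n) * ((-1:F) ^ n) = 1 := by
    rw [← pow_add, ← two_mul, pow_mul]
    norm_num
  have hcval : c = (-1:F) ^ n := by
    calc c = c * (((-1:F) ^ n) * ((-1:F) ^ n)) := by rw [key, mul_one]
    _ = (c * (-1:F) ^ n) * (-1:F) ^ n := by ring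
    _ = (-1:F) ^ n := by rw [h1, one_mul]
  have hbase : (C (-1 : F)) * (X - 1) = 1 - X := by
    rw [map_neg, map_one]
    ring
  rw [hcf, hcval, map_pow, ← mul_pow, hbase]

lemma one_sub_X_ne_zero' : (1 - X : Polynomial F) ≠ 0 := fun h => by
  simpa using congrArg (eval 0) h

lemma natDegree_one_sub_X : (1 - X : Polynomial F).natDegree = 1 := by
  rw [show (1 - X : Polynomial F) = -(X - 1) by ring, natDegree_neg]
  simpa using natDegree_X_sub_C (1 : F)

lemma assoc_X_sub_one : Associated (X - 1 : Polynomial F) (1 - X) :=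
  ⟨⟨-1, -1, by ring, by ring⟩, show (X - 1 : Polynomial F) * (-1) = 1 - X by ring⟩

lemma irreducible_one_sub_X : Irreducible (1 - X : Polynomial F) :=
  assoc_X_sub_one.irreducible (by simpa using irreducible_X_sub_C (1 : F))

end Helpers

/-- Let `q = p^k` with `p` prime and `T = p^u · M` with `u ≥ 1` and `gcd(M, q) = 1`.
A polynomial `f` over `GF(q)` of degree `r` with `f(0) = 1` and period set `{1, T}`
exists if and only if `M = 1`, `u = 1` and `2 ≤ r ≤ p`; and in that case any such `f`
is necessarily `(1-x)^r`. -/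
theorem stmt_12 {F : Type*} [Field F] [Fintype F] (p : ℕ) [hp : Fact p.Prime] [CharP F p]
    (q : ℕ) (hq : q = Fintype.card F)
    (T M u : ℕ) (hu : 1 ≤ u) (hM : Nat.Coprime M q) (hTMu : T = p ^ u * M) (r : ℕ) :
    ((∃ f : Polynomial F, f.natDegree = r ∧ f.coeff 0 = 1 ∧ periodSet f = {1, T}) ↔
        (M = 1 ∧ u = 1 ∧ 2 ≤ r ∧ r ≤ p)) ∧
      ∀ f : Polynomial F, f.natDegree = r → f.coeff 0 = 1 → periodSet f = {1, T} →
        f = (1 - X) ^ r := by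
  have hp2 : 2 ≤ p := hp.out.two_le
  have hq2 : 1 < q := hq ▸ Fintype.one_lt_card
  have hM0 : M ≠ 0 := by
    intro h
    rw [h, Nat.coprime_zero_left] at hM
    omega
  have hM1 : 1 ≤ M := Nat.one_le_iff_ne_zero.mpr hM0
  have hpu : p ≤ p ^ u := Nat.le_self_pow (by omega) p
  have hT2 : 2 ≤ T := by
    have h3 : p ^ u * 1 ≤ p ^ u * M := Nat.mul_le_mul_left _ hM1
    rw [mul_one] at h3
    omega
  have hpT : p ∣ T := by
    rw [hTMu]
    exact dvd_mul_of_dvd_left (dvd_pow_self p (by omega)) M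
  have hne : (1 - X : Polynomial F) ≠ 0 := one_sub_X_ne_zero'
  have hcoeff : ∀ e : ℕ, ((1 - X : Polynomial F) ^ e).coeff 0 ≠ 0 := by
    intro e
    rw [coeff_zero_eq_eval_zero]
    simp
  have hdegpow : ∀ e : ℕ, ((1 - X : Polynomial F) ^ e).natDegree = e := by
    intro e
    rw [natDegree_pow, natDegree_one_sub_X, mul_one]
  constructor
  · constructor
    · rintro ⟨f, hdeg, hc, hps⟩
      have hf := unique_lemma hT2 hpT f hc hps
      rw [hdeg] at hf
      have hr2 : 2 ≤ r := by
        by_contra hlt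
        push_neg at hlt
        have hfd : f ∣ X - 1 := by
          interval_cases r
          · rw [hf, pow_zero]; exact one_dvd _
          · rw [hf, pow_one]; exact ⟨-1, by ring⟩
        have hTmem : T ∈ periodSet f := by rw [hps]; right; rfl
        obtain ⟨g, hgf, hg0, hgc, hTg⟩ := hTmem
        have := polyOrd_eq_one (dvd_trans hgf hfd)
        omega
      have hpmem : p ∈ periodSet f :=
        ⟨(1 - X) ^ 2, by rw [hf]; exact pow_dvd_pow _ hr2, pow_ne_zero _ hne, hcoeff 2,
          (polyOrd_pow_eq le_rfl hp2).symm⟩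
      rw [hps] at hpmem
      have hTp : T = p := by
        rcases hpmem with h | h
        · omega
        · simpa using h.symm
      have hu1 : u = 1 := by
        by_contra h
        have h2u : 2 ≤ u := by omega
        have hd : p ^ 2 ∣ T := by
          rw [hTMu]
          exact Dvd.dvd.mul_right (pow_dvd_pow p h2u) M
        rw [hTp] at hd
        have := Nat.le_of_dvd (by omega) hd
        nlinarith
      have hM1' : M = 1 := by
        rw [hu1, pow_one, hTp] at hTMu
        have hpm : p * M = p * 1 := by rw [mul_one]; linarith [hTMu]
        exact Nat.eq_of_mul_eq_mul_left (by omega) hpm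
      have hrp : r ≤ p := by
        have hfm : polyOrd ((1 - X : Polynomial F) ^ r) ∈ periodSet f :=
          ⟨(1 - X) ^ r, by rw [hf], pow_ne_zero _ hne, hcoeff r, rfl⟩
        rw [hps, hTp] at hfm
        rcases hfm with h | h
        · exfalso
          have hsp := (polyOrd_spec (g := (1 - X : Polynomial F) ^ r) (by rw [h]; omega)).2
          rw [h, pow_one] at hsp
          have := natDegree_le_of_dvd hsp X_sub_one_ne_zero
          rw [hdegpow, show (X - 1 : Polynomial F).natDegree = 1 by
            simpa using natDegree_X_sub_C (1 : F)] at this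
          omega
        · simp only [Set.mem_singleton_iff] at h
          have hsp := (polyOrd_spec (g := (1 - X : Polynomial F) ^ r) (by rw [h]; omega)).2
          rw [h] at hsp
          have hXp0 : (X : Polynomial F) ^ p - 1 ≠ 0 := by
            simpa using X_pow_sub_C_ne_zero (show 0 < p by omega) (1 : F)
          have := natDegree_le_of_dvd hsp hXp0
          rw [hdegpow] at this
          calc r ≤ ((X : Polynomial F) ^ p - 1).natDegree := this
          _ ≤ p := natDegree_X_pow_sub_C.le
      exact ⟨hM1', hu1, hr2, hrp⟩
    · rintro ⟨hM1, hu1, hr2, hrp⟩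
      have hTp : T = p := by rw [hTMu, hM1, hu1]; simp
      refine ⟨(1 - X) ^ r, hdegpow r, by rw [coeff_zero_eq_eval_zero]; simp, ?_⟩
      rw [hTp]
      ext t
      simp only [periodSet, Set.mem_setOf_eq, Set.mem_insert_iff, Set.mem_singleton_iff]
      constructor
      · rintro ⟨g, hgf, hg0, hgc, rfl⟩
        obtain ⟨e, hle, hassoc⟩ := (dvd_prime_pow irreducible_one_sub_X.prime r).mp hgf
        have hord : polyOrd g = polyOrd ((1 - X : Polynomial F) ^ e) := by
          unfold polyOrd
          congr 1
          ext j
          exact and_congr_right fun _ => hassoc.dvd_iff_dvd_left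
        rcases Nat.lt_or_ge e 2 with he | he
        · left
          rw [hord]
          apply polyOrd_eq_one
          interval_cases e
          · rw [pow_zero]; exact one_dvd _
          · rw [pow_one]; exact ⟨-1, by ring⟩
        · right
          rw [hord]
          exact polyOrd_pow_eq he (le_trans hle hrp)
      · rintro (rfl | rfl)
        · exact ⟨1, one_dvd _, one_ne_zero, by simp, (polyOrd_eq_one (one_dvd _)).symm⟩
        · exact ⟨(1 - X) ^ 2, pow_dvd_pow _ hr2, pow_ne_zero _ hne, hcoeff 2,
            (polyOrd_pow_eq le_rfl hp2).symm⟩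
  · intro f hdeg hc hps
    rw [← hdeg]
    exact unique_lemma hT2 hpT f hc hps
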